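/- Let v₁, v₂, v₃, v₄ be orthonormal vectors in ℝ⁷. Then |ψ(v₁, v₂, v₃, v₄)| = 1 if and only if φ(vᵢ, vⱼ, v_k) = 0 for all i, j, k ∈ {1, 2, 3, 4}. (Pointwise form of the lemma that an oriented 4-plane is coassociative, for a suitable orientation, if and only if φ vanishes on it.) -/

import Mathlib

noncomputable section

open scoped InnerProductSpace

/-- `3 × 3` determinant of coordinates `a, b, c` of `(x, y, z)`. -/
def det3 (a b c : Fin 7) (x y z : EuclideanSpace ℝ (Fin 7)) : ℝ :=
  x a * (y b * z c - y c * z b) - x b * (y a * z c - y c * z a) +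
    x c * (y a * z b - y b * z a)

/-- The associative calibration `φ` of Harvey–Lawson on `ℝ⁷`. -/
def phi (x y z : EuclideanSpace ℝ (Fin 7)) : ℝ :=
  det3 4 5 6 x y z - det3 4 0 1 x y z - det3 4 2 3 x y z -
    det3 5 0 2 x y z - det3 5 3 1 x y z - det3 6 0 3 x y z - det3 6 1 2 x y z

/-- `4 × 4` determinant of coordinates `a, b, c, d` of `(x, y, z, w)`. -/
def det4 (a b c d : Fin 7) (x y z w : EuclideanSpace ℝ (Fin 7)) : ℝ :=
  x a * det3 b c d y z w - x b * det3 a c d y z w +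
    x c * det3 a b d y z w - x d * det3 a b c y z w

/-- The coassociative calibration `ψ = ∗φ` on `ℝ⁷`. -/
def psi (x y z w : EuclideanSpace ℝ (Fin 7)) : ℝ :=
  det4 0 1 2 3 x y z w - det4 0 1 5 6 x y z w - det4 2 3 5 6 x y z w -
    det4 0 2 6 4 x y z w - det4 3 1 6 4 x y z w - det4 0 3 4 5 x y z w -
    det4 1 2 4 5 x y z w

lemma phi_xxz (x z : EuclideanSpace ℝ (Fin 7)) : phi x x z = 0 := by
  simp only [phi, det3]; ring
lemma phi_xyx (x y : EuclideanSpace ℝ (Fin 7)) : phi x y x = 0 := by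
  simp only [phi, det3]; ring
lemma phi_xyy (x y : EuclideanSpace ℝ (Fin 7)) : phi x y y = 0 := by
  simp only [phi, det3]; ring

set_option maxRecDepth 1000000 in
set_option maxHeartbeats 4000000 in
lemma key_identity {x0 x1 x2 x3 x4 x5 x6 y0 y1 y2 y3 y4 y5 y6 z0 z1 z2 z3 z4 z5 z6 w0 w1 w2 w3 w4 w5 w6 A B C D Pp : ℝ}
    (hA : A = -x0*y1*z4 - x0*y2*z5 - x0*y3*z6 + x0*y4*z1 + x0*y5*z2 + x0*y6*z3 + x1*y0*z4 - x1*y2*z6 + x1*y3*z5 - x1*y4*z0 - x1*y5*z3 + x1*y6*z2 + x2*y0*z5 + x2*y1*z6 - x2*y3*z4 + x2*y4*z3 - x2*y5*z0 - x2*y6*z1 + x3*y0*z6 - x3*y1*z5 + x3*y2*z4 - x3*y4*z2 + x3*y5*z1 - x3*y6*z0 - x4*y0*z1 + x4*y1*z0 - x4*y2*z3 + x4*y3*z2 + x4*y5*z6 - x4*y6*z5 - x5*y0*z2 + x5*y1*z3 + x5*y2*z0 - x5*y3*z1 - x5*y4*z6 + x5*y6*z4 - x6*y0*z3 - x6*y1*z2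 + x6*y2*z1 + x6*y3*z0 + x6*y4*z5 - x6*y5*z4)
    (hB : B = -w0*x1*y4 - w0*x2*y5 - w0*x3*y6 + w0*x4*y1 + w0*x5*y2 + w0*x6*y3 + w1*x0*y4 - w1*x2*y6 + w1*x3*y5 - w1*x4*y0 - w1*x5*y3 + w1*x6*y2 + w2*x0*y5 + w2*x1*y6 - w2*x3*y4 + w2*x4*y3 - w2*x5*y0 - w2*x6*y1 + w3*x0*y6 - w3*x1*y5 + w3*x2*y4 - w3*x4*y2 + w3*x5*y1 - w3*x6*y0 - w4*x0*y1 + w4*x1*y0 - w4*x2*y3 + w4*x3*y2 + w4*x5*y6 - w4*x6*y5 - w5*x0*y2 + w5*x1*y3 + w5*x2*y0 - w5*x3*y1 - w5*x4*y6 + w5*x6*y4 - w6*x0*y3 - w6*x1*y2 + w6*x2*y1 + w6*x3*y0 + w6*x4*y5 - w6*x5*y4)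
    (hC : C = -w0*x1*z4 - w0*x2*z5 - w0*x3*z6 + w0*x4*z1 + w0*x5*z2 + w0*x6*z3 + w1*x0*z4 - w1*x2*z6 + w1*x3*z5 - w1*x4*z0 - w1*x5*z3 + w1*x6*z2 + w2*x0*z5 + w2*x1*z6 - w2*x3*z4 + w2*x4*z3 - w2*x5*z0 - w2*x6*z1 + w3*x0*z6 - w3*x1*z5 + w3*x2*z4 - w3*x4*z2 + w3*x5*z1 - w3*x6*z0 - w4*x0*z1 + w4*x1*z0 - w4*x2*z3 + w4*x3*z2 + w4*x5*z6 - w4*x6*z5 - w5*x0*z2 + w5*x1*z3 + w5*x2*z0 - w5*x3*z1 - w5*x4*z6 + w5*x6*z4 - w6*x0*z3 - w6*x1*z2 + w6*x2*z1 + w6*x3*z0 + w6*x4*z5 - w6*x5*z4)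
    (hD : D = -w0*y1*z4 - w0*y2*z5 - w0*y3*z6 + w0*y4*z1 + w0*y5*z2 + w0*y6*z3 + w1*y0*z4 - w1*y2*z6 + w1*y3*z5 - w1*y4*z0 - w1*y5*z3 + w1*y6*z2 + w2*y0*z5 + w2*y1*z6 - w2*y3*z4 + w2*y4*z3 - w2*y5*z0 - w2*y6*z1 + w3*y0*z6 - w3*y1*z5 + w3*y2*z4 - w3*y4*z2 + w3*y5*z1 - w3*y6*z0 - w4*y0*z1 + w4*y1*z0 - w4*y2*z3 + w4*y3*z2 + w4*y5*z6 - w4*y6*z5 - w5*y0*z2 + w5*y1*z3 + w5*y2*z0 - w5*y3*z1 - w5*y4*z6 + w5*y6*z4 - w6*y0*z3 - w6*y1*z2 + w6*y2*z1 + w6*y3*z0 + w6*y4*z5 - w6*y5*z4)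
    (hP : Pp = -w0*x1*y2*z3 + w0*x1*y3*z2 + w0*x1*y5*z6 - w0*x1*y6*z5 + w0*x2*y1*z3 - w0*x2*y3*z1 - w0*x2*y4*z6 + w0*x2*y6*z4 - w0*x3*y1*z2 + w0*x3*y2*z1 + w0*x3*y4*z5 - w0*x3*y5*z4 + w0*x4*y2*z6 - w0*x4*y3*z5 + w0*x4*y5*z3 - w0*x4*y6*z2 - w0*x5*y1*z6 + w0*x5*y3*z4 - w0*x5*y4*z3 + w0*x5*y6*z1 + w0*x6*y1*z5 - w0*x6*y2*z4 + w0*x6*y4*z2 - w0*x6*y5*z1 + w1*x0*y2*z3 - w1*x0*y3*z2 - w1*x0*y5*z6 + w1*x0*y6*z5 - w1*x2*y0*z3 + w1*x2*y3*z0 + w1*x2*y4*z5 - w1*x2*y5*z4 + w1*x3*y0*z2 - w1*x3*y2*z0 + w1*x3*y4*z6 - w1*x3*y6*z4 - w1*x4*y2*z5 - w1*x4*y3*z6 + w1*x4*y5*z2 + w1*x4*y6*z3 + w1*x5*y0*z6 + w1*x5*y2*z4 - w1*x5*y4*z2 - w1*x5*y6*z0 - w1*x6*y0*z5 + w1*x6*y3*z4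 - w1*x6*y4*z3 + w1*x6*y5*z0 - w2*x0*y1*z3 + w2*x0*y3*z1 + w2*x0*y4*z6 - w2*x0*y6*z4 + w2*x1*y0*z3 - w2*x1*y3*z0 - w2*x1*y4*z5 + w2*x1*y5*z4 - w2*x3*y0*z1 + w2*x3*y1*z0 + w2*x3*y5*z6 - w2*x3*y6*z5 - w2*x4*y0*z6 + w2*x4*y1*z5 - w2*x4*y5*z1 + w2*x4*y6*z0 - w2*x5*y1*z4 - w2*x5*y3*z6 + w2*x5*y4*z1 + w2*x5*y6*z3 + w2*x6*y0*z4 + w2*x6*y3*z5 - w2*x6*y4*z0 - w2*x6*y5*z3 + w3*x0*y1*z2 - w3*x0*y2*z1 - w3*x0*y4*z5 + w3*x0*y5*z4 - w3*x1*y0*z2 + w3*x1*y2*z0 - w3*x1*y4*z6 + w3*x1*y6*z4 + w3*x2*y0*z1 - w3*x2*y1*z0 - w3*x2*y5*z6 + w3*x2*y6*z5 + w3*x4*y0*z5 + w3*x4*y1*z6 - w3*x4*y5*z0 - w3*x4*y6*z1 - w3*x5*y0*z4 + w3*x5*y2*z6 + w3*x5*y4*z0 - w3*x5*y6*z2 -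 w3*x6*y1*z4 - w3*x6*y2*z5 + w3*x6*y4*z1 + w3*x6*y5*z2 - w4*x0*y2*z6 + w4*x0*y3*z5 - w4*x0*y5*z3 + w4*x0*y6*z2 + w4*x1*y2*z5 + w4*x1*y3*z6 - w4*x1*y5*z2 - w4*x1*y6*z3 + w4*x2*y0*z6 - w4*x2*y1*z5 + w4*x2*y5*z1 - w4*x2*y6*z0 - w4*x3*y0*z5 - w4*x3*y1*z6 + w4*x3*y5*z0 + w4*x3*y6*z1 + w4*x5*y0*z3 + w4*x5*y1*z2 - w4*x5*y2*z1 - w4*x5*y3*z0 - w4*x6*y0*z2 + w4*x6*y1*z3 + w4*x6*y2*z0 - w4*x6*y3*z1 + w5*x0*y1*z6 - w5*x0*y3*z4 + w5*x0*y4*z3 - w5*x0*y6*z1 - w5*x1*y0*z6 - w5*x1*y2*z4 + w5*x1*y4*z2 + w5*x1*y6*z0 + w5*x2*y1*z4 + w5*x2*y3*z6 - w5*x2*y4*z1 - w5*x2*y6*z3 + w5*x3*y0*z4 - w5*x3*y2*z6 - w5*x3*y4*z0 + w5*x3*y6*z2 - w5*x4*y0*z3 - w5*x4*y1*z2 + w5*x4*y2*z1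 + w5*x4*y3*z0 + w5*x6*y0*z1 - w5*x6*y1*z0 + w5*x6*y2*z3 - w5*x6*y3*z2 - w6*x0*y1*z5 + w6*x0*y2*z4 - w6*x0*y4*z2 + w6*x0*y5*z1 + w6*x1*y0*z5 - w6*x1*y3*z4 + w6*x1*y4*z3 - w6*x1*y5*z0 - w6*x2*y0*z4 - w6*x2*y3*z5 + w6*x2*y4*z0 + w6*x2*y5*z3 + w6*x3*y1*z4 + w6*x3*y2*z5 - w6*x3*y4*z1 - w6*x3*y5*z2 + w6*x4*y0*z2 - w6*x4*y1*z3 - w6*x4*y2*z0 + w6*x4*y3*z1 - w6*x5*y0*z1 + w6*x5*y1*z0 - w6*x5*y2*z3 + w6*x5*y3*z2)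
    (hxx : x0*x0 + x1*x1 + x2*x2 + x3*x3 + x4*x4 + x5*x5 + x6*x6 = 1)
    (hyy : y0*y0 + y1*y1 + y2*y2 + y3*y3 + y4*y4 + y5*y5 + y6*y6 = 1)
    (hzz : z0*z0 + z1*z1 + z2*z2 + z3*z3 + z4*z4 + z5*z5 + z6*z6 = 1)
    (hww : w0*w0 + w1*w1 + w2*w2 + w3*w3 + w4*w4 + w5*w5 + w6*w6 = 1)
    (hxy : x0*y0 + x1*y1 + x2*y2 + x3*y3 + x4*y4 + x5*y5 + x6*y6 = 0)
    (hxz : x0*z0 + x1*z1 + x2*z2 + x3*z3 + x4*z4 + x5*z5 + x6*z6 = 0)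
    (hxw : x0*w0 + x1*w1 + x2*w2 + x3*w3 + x4*w4 + x5*w5 + x6*w6 = 0)
    (hyz : y0*z0 + y1*z1 + y2*z2 + y3*z3 + y4*z4 + y5*z5 + y6*z6 = 0)
    (hyw : y0*w0 + y1*w1 + y2*w2 + y3*w3 + y4*w4 + y5*w5 + y6*w6 = 0)
    (hzw : z0*w0 + z1*w1 + z2*w2 + z3*w3 + z4*w4 + z5*w5 + z6*w6 = 0) :
    Pp * Pp + A * A + B * B + C * C + D * D = 1 := by
  obtain ⟨a0, ha0⟩ : ∃ t : ℝ, t = -x1*y4 - x2*y5 - x3*y6 + x4*y1 + x5*y2 + x6*y3 := ⟨_, rfl⟩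
  obtain ⟨a1, ha1⟩ : ∃ t : ℝ, t = x0*y4 - x2*y6 + x3*y5 - x4*y0 - x5*y3 + x6*y2 := ⟨_, rfl⟩
  obtain ⟨a2, ha2⟩ : ∃ t : ℝ, t = x0*y5 + x1*y6 - x3*y4 + x4*y3 - x5*y0 - x6*y1 := ⟨_, rfl⟩
  obtain ⟨a3, ha3⟩ : ∃ t : ℝ, t = x0*y6 - x1*y5 + x2*y4 - x4*y2 + x5*y1 - x6*y0 := ⟨_, rfl⟩
  obtain ⟨a4, ha4⟩ : ∃ t : ℝ, t = -x0*y1 + x1*y0 - x2*y3 + x3*y2 + x5*y6 - x6*y5 := ⟨_, rfl⟩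
  obtain ⟨a5, ha5⟩ : ∃ t : ℝ, t = -x0*y2 + x1*y3 + x2*y0 - x3*y1 - x4*y6 + x6*y4 := ⟨_, rfl⟩
  obtain ⟨a6, ha6⟩ : ∃ t : ℝ, t = -x0*y3 - x1*y2 + x2*y1 + x3*y0 + x4*y5 - x5*y4 := ⟨_, rfl⟩
  obtain ⟨b0, hb0⟩ : ∃ t : ℝ, t = w1*z4 + w2*z5 + w3*z6 - w4*z1 - w5*z2 - w6*z3 := ⟨_, rfl⟩
  obtain ⟨b1, hb1⟩ : ∃ t : ℝ, t = -w0*z4 + w2*z6 - w3*z5 + w4*z0 + w5*z3 - w6*z2 := ⟨_, rfl⟩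
  obtain ⟨b2, hb2⟩ : ∃ t : ℝ, t = -w0*z5 - w1*z6 + w3*z4 - w4*z3 + w5*z0 + w6*z1 := ⟨_, rfl⟩
  obtain ⟨b3, hb3⟩ : ∃ t : ℝ, t = -w0*z6 + w1*z5 - w2*z4 + w4*z2 - w5*z1 + w6*z0 := ⟨_, rfl⟩
  obtain ⟨b4, hb4⟩ : ∃ t : ℝ, t = w0*z1 - w1*z0 + w2*z3 - w3*z2 - w5*z6 + w6*z5 := ⟨_, rfl⟩
  obtain ⟨b5, hb5⟩ : ∃ t : ℝ, t = w0*z2 - w1*z3 - w2*z0 + w3*z1 + w4*z6 - w6*z4 := ⟨_, rfl⟩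
  obtain ⟨b6, hb6⟩ : ∃ t : ℝ, t = w0*z3 + w1*z2 - w2*z1 - w3*z0 - w4*z5 + w5*z4 := ⟨_, rfl⟩
  have f1 : Pp = a0*b0 + a1*b1 + a2*b2 + a3*b3 + a4*b4 + a5*b5 + a6*b6 := by
    simp only [hP, ha0, ha1, ha2, ha3, ha4, ha5, ha6, hb0, hb1, hb2, hb3, hb4, hb5, hb6]
    linear_combination (-(y0*w0 + y1*w1 + y2*w2 + y3*w3 + y4*w4 + y5*w5 + y6*w6))*hxz + (y0*z0 + y1*z1 + y2*z2 + y3*z3 + y4*z4 + y5*z5 + y6*z6)*hxw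
  have f2 : a0*a0 + a1*a1 + a2*a2 + a3*a3 + a4*a4 + a5*a5 + a6*a6 = 1 := by
    simp only [ha0, ha1, ha2, ha3, ha4, ha5, ha6]
    linear_combination (y0*y0 + y1*y1 + y2*y2 + y3*y3 + y4*y4 + y5*y5 + y6*y6)*hxx + hyy + (-(x0*y0 + x1*y1 + x2*y2 + x3*y3 + x4*y4 + x5*y5 + x6*y6))*hxy
  have f3 : b0*b0 + b1*b1 + b2*b2 + b3*b3 + b4*b4 + b5*b5 + b6*b6 = 1 := by
    simp only [hb0, hb1, hb2, hb3, hb4, hb5, hb6]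
    linear_combination (w0*w0 + w1*w1 + w2*w2 + w3*w3 + w4*w4 + w5*w5 + w6*w6)*hzz + hww + (-(z0*w0 + z1*w1 + z2*w2 + z3*w3 + z4*w4 + z5*w5 + z6*w6))*hzw
  have g0 : -a1*b4 - a2*b5 - a3*b6 + a4*b1 + a5*b2 + a6*b3 = (-D)*x0 + C*y0 + B*z0 - A*w0 := by
    simp only [hA, hB, hC, hD, ha0, ha1, ha2, ha3, ha4, ha5, ha6, hb0, hb1, hb2, hb3, hb4, hb5, hb6]
    linear_combination (-(w1*y4 + w2*y5 + w3*y6 - w4*y1 - w5*y2 - w6*y3))*hxz + (-y1*z4 - y2*z5 - y3*z6 + y4*z1 + y5*z2 + y6*z3)*hxw + (w1*x4 + w2*x5 + w3*x6 - w4*x1 - w5*x2 - w6*x3)*hyz + (-(-x1*z4 - x2*z5 - x3*z6 + x4*z1 + x5*z2 + x6*z3))*hyw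
  have g1 : a0*b4 - a2*b6 + a3*b5 - a4*b0 - a5*b3 + a6*b2 = (-D)*x1 + C*y1 + B*z1 - A*w1 := by
    simp only [hA, hB, hC, hD, ha0, ha1, ha2, ha3, ha4, ha5, ha6, hb0, hb1, hb2, hb3, hb4, hb5, hb6]
    linear_combination (-(-w0*y4 + w2*y6 - w3*y5 + w4*y0 + w5*y3 - w6*y2))*hxz + (y0*z4 - y2*z6 + y3*z5 - y4*z0 - y5*z3 + y6*z2)*hxw + (-w0*x4 + w2*x6 - w3*x5 + w4*x0 + w5*x3 - w6*x2)*hyz + (-(x0*z4 - x2*z6 + x3*z5 - x4*z0 - x5*z3 + x6*z2))*hyw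
  have g2 : a0*b5 + a1*b6 - a3*b4 + a4*b3 - a5*b0 - a6*b1 = (-D)*x2 + C*y2 + B*z2 - A*w2 := by
    simp only [hA, hB, hC, hD, ha0, ha1, ha2, ha3, ha4, ha5, ha6, hb0, hb1, hb2, hb3, hb4, hb5, hb6]
    linear_combination (-(-w0*y5 - w1*y6 + w3*y4 - w4*y3 + w5*y0 + w6*y1))*hxz + (y0*z5 + y1*z6 - y3*z4 + y4*z3 - y5*z0 - y6*z1)*hxw + (-w0*x5 - w1*x6 + w3*x4 - w4*x3 + w5*x0 + w6*x1)*hyz + (-(x0*z5 + x1*z6 - x3*z4 + x4*z3 - x5*z0 - x6*z1))*hyw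
  have g3 : a0*b6 - a1*b5 + a2*b4 - a4*b2 + a5*b1 - a6*b0 = (-D)*x3 + C*y3 + B*z3 - A*w3 := by
    simp only [hA, hB, hC, hD, ha0, ha1, ha2, ha3, ha4, ha5, ha6, hb0, hb1, hb2, hb3, hb4, hb5, hb6]
    linear_combination (-(-w0*y6 + w1*y5 - w2*y4 + w4*y2 - w5*y1 + w6*y0))*hxz + (y0*z6 - y1*z5 + y2*z4 - y4*z2 + y5*z1 - y6*z0)*hxw + (-w0*x6 + w1*x5 - w2*x4 + w4*x2 - w5*x1 + w6*x0)*hyz + (-(x0*z6 - x1*z5 + x2*z4 - x4*z2 + x5*z1 - x6*z0))*hyw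
  have g4 : -a0*b1 + a1*b0 - a2*b3 + a3*b2 + a5*b6 - a6*b5 = (-D)*x4 + C*y4 + B*z4 - A*w4 := by
    simp only [hA, hB, hC, hD, ha0, ha1, ha2, ha3, ha4, ha5, ha6, hb0, hb1, hb2, hb3, hb4, hb5, hb6]
    linear_combination (-(w0*y1 - w1*y0 + w2*y3 - w3*y2 - w5*y6 + w6*y5))*hxz + (-y0*z1 + y1*z0 - y2*z3 + y3*z2 + y5*z6 - y6*z5)*hxw + (w0*x1 - w1*x0 + w2*x3 - w3*x2 - w5*x6 + w6*x5)*hyz + (-(-x0*z1 + x1*z0 - x2*z3 + x3*z2 + x5*z6 - x6*z5))*hyw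
  have g5 : -a0*b2 + a1*b3 + a2*b0 - a3*b1 - a4*b6 + a6*b4 = (-D)*x5 + C*y5 + B*z5 - A*w5 := by
    simp only [hA, hB, hC, hD, ha0, ha1, ha2, ha3, ha4, ha5, ha6, hb0, hb1, hb2, hb3, hb4, hb5, hb6]
    linear_combination (-(w0*y2 - w1*y3 - w2*y0 + w3*y1 + w4*y6 - w6*y4))*hxz + (-y0*z2 + y1*z3 + y2*z0 - y3*z1 - y4*z6 + y6*z4)*hxw + (w0*x2 - w1*x3 - w2*x0 + w3*x1 + w4*x6 - w6*x4)*hyz + (-(-x0*z2 + x1*z3 + x2*z0 - x3*z1 - x4*z6 + x6*z4))*hyw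
  have g6 : -a0*b3 - a1*b2 + a2*b1 + a3*b0 + a4*b5 - a5*b4 = (-D)*x6 + C*y6 + B*z6 - A*w6 := by
    simp only [hA, hB, hC, hD, ha0, ha1, ha2, ha3, ha4, ha5, ha6, hb0, hb1, hb2, hb3, hb4, hb5, hb6]
    linear_combination (-(w0*y3 + w1*y2 - w2*y1 - w3*y0 - w4*y5 + w5*y4))*hxz + (-y0*z3 - y1*z2 + y2*z1 + y3*z0 + y4*z5 - y5*z4)*hxw + (w0*x3 + w1*x2 - w2*x1 - w3*x0 - w4*x5 + w5*x4)*hyz + (-(-x0*z3 - x1*z2 + x2*z1 + x3*z0 + x4*z5 - x5*z4))*hyw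
  have f5 : (-a1*b4 - a2*b5 - a3*b6 + a4*b1 + a5*b2 + a6*b3)*(-a1*b4 - a2*b5 - a3*b6 + a4*b1 + a5*b2 + a6*b3) + (a0*b4 - a2*b6 + a3*b5 - a4*b0 - a5*b3 + a6*b2)*(a0*b4 - a2*b6 + a3*b5 - a4*b0 - a5*b3 + a6*b2) + (a0*b5 + a1*b6 - a3*b4 + a4*b3 - a5*b0 - a6*b1)*(a0*b5 + a1*b6 - a3*b4 + a4*b3 - a5*b0 - a6*b1) + (a0*b6 - a1*b5 + a2*b4 - a4*b2 + a5*b1 - a6*b0)*(a0*b6 - a1*b5 + a2*b4 - a4*b2 + a5*b1 - a6*b0) + (-a0*b1 + a1*b0 - a2*b3 + a3*b2 + a5*b6 - a6*b5)*(-a0*b1 + a1*b0 - a2*b3 + a3*b2 + a5*b6 - a6*b5) + (-a0*b2 + a1*b3 + a2*b0 - a3*b1 - a4*b6 + a6*b4)*(-a0*b2 + a1*b3 + a2*b0 - a3*b1 - a4*b6 + a6*b4) + (-a0*b3 - a1*b2 + a2*b1 + a3*b0 + a4*b5 - a5*b4)*(-a0*b3 - a1*b2 + a2*b1 + a3*b0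 + a4*b5 - a5*b4) = A*A + B*B + C*C + D*D := by
    linear_combination ((-a1*b4 - a2*b5 - a3*b6 + a4*b1 + a5*b2 + a6*b3) + ((-D)*x0 + C*y0 + B*z0 - A*w0))*g0 + ((a0*b4 - a2*b6 + a3*b5 - a4*b0 - a5*b3 + a6*b2) + ((-D)*x1 + C*y1 + B*z1 - A*w1))*g1 + ((a0*b5 + a1*b6 - a3*b4 + a4*b3 - a5*b0 - a6*b1) + ((-D)*x2 + C*y2 + B*z2 - A*w2))*g2 + ((a0*b6 - a1*b5 + a2*b4 - a4*b2 + a5*b1 - a6*b0) + ((-D)*x3 + C*y3 + B*z3 - A*w3))*g3 + ((-a0*b1 + a1*b0 - a2*b3 + a3*b2 + a5*b6 - a6*b5) + ((-D)*x4 + C*y4 + B*z4 - A*w4))*g4 + ((-a0*b2 + a1*b3 + a2*b0 - a3*b1 - a4*b6 + a6*b4) + ((-D)*x5 + C*y5 + B*z5 - A*w5))*g5 + ((-a0*b3 - a1*b2 + a2*b1 + a3*b0 + a4*b5 - a5*b4) + ((-D)*x6 + C*y6 + B*z6 - A*w6))*g6 + (D*D)*hxx + (C*C)*hyy + (B*B)*hzz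 + (A*A)*hww + (-2*C*D)*hxy + (-2*B*D)*hxz + (2*A*D)*hxw + (2*B*C)*hyz + (-2*A*C)*hyw + (-2*A*B)*hzw
  have f6 : (-a1*b4 - a2*b5 - a3*b6 + a4*b1 + a5*b2 + a6*b3)*(-a1*b4 - a2*b5 - a3*b6 + a4*b1 + a5*b2 + a6*b3) + (a0*b4 - a2*b6 + a3*b5 - a4*b0 - a5*b3 + a6*b2)*(a0*b4 - a2*b6 + a3*b5 - a4*b0 - a5*b3 + a6*b2) + (a0*b5 + a1*b6 - a3*b4 + a4*b3 - a5*b0 - a6*b1)*(a0*b5 + a1*b6 - a3*b4 + a4*b3 - a5*b0 - a6*b1) + (a0*b6 - a1*b5 + a2*b4 - a4*b2 + a5*b1 - a6*b0)*(a0*b6 - a1*b5 + a2*b4 - a4*b2 + a5*b1 - a6*b0) + (-a0*b1 + a1*b0 - a2*b3 + a3*b2 + a5*b6 - a6*b5)*(-a0*b1 + a1*b0 - a2*b3 + a3*b2 + a5*b6 - a6*b5) + (-a0*b2 + a1*b3 + a2*b0 - a3*b1 - a4*b6 + a6*b4)*(-a0*b2 + a1*b3 + a2*b0 - a3*b1 -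 a4*b6 + a6*b4) + (-a0*b3 - a1*b2 + a2*b1 + a3*b0 + a4*b5 - a5*b4)*(-a0*b3 - a1*b2 + a2*b1 + a3*b0 + a4*b5 - a5*b4) = (a0*a0 + a1*a1 + a2*a2 + a3*a3 + a4*a4 + a5*a5 + a6*a6) * (b0*b0 + b1*b1 + b2*b2 + b3*b3 + b4*b4 + b5*b5 + b6*b6) - (a0*b0 + a1*b1 + a2*b2 + a3*b3 + a4*b4 + a5*b5 + a6*b6) * (a0*b0 + a1*b1 + a2*b2 + a3*b3 + a4*b4 + a5*b5 + a6*b6) := by ring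
  linear_combination (Pp + (a0*b0 + a1*b1 + a2*b2 + a3*b3 + a4*b4 + a5*b5 + a6*b6))*f1 + (-1)*f5 + f6 + (b0*b0 + b1*b1 + b2*b2 + b3*b3 + b4*b4 + b5*b5 + b6*b6)*f2 + f3

lemma sq_sum4_eq_zero (a b c d : ℝ) (h : a*a + b*b + c*c + d*d = 0) :
    a = 0 ∧ b = 0 ∧ c = 0 ∧ d = 0 := by
  refine ⟨mul_self_eq_zero.mp ?_, mul_self_eq_zero.mp ?_, mul_self_eq_zero.mp ?_,
    mul_self_eq_zero.mp ?_⟩ <;>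
    nlinarith [mul_self_nonneg a, mul_self_nonneg b, mul_self_nonneg c, mul_self_nonneg d]

set_option maxRecDepth 1000000 in
set_option maxHeartbeats 4000000 in
theorem abs_psi_eq_one_iff_phi_vanishes (v : Fin 4 → EuclideanSpace ℝ (Fin 7))
    (hv : Orthonormal ℝ v) :
    |psi (v 0) (v 1) (v 2) (v 3)| = 1 ↔
      ∀ i j k : Fin 4, phi (v i) (v j) (v k) = 0 := by
  have hinner : ∀ i j : Fin 4,
      v i 0 * v j 0 + v i 1 * v j 1 + v i 2 * v j 2 + v i 3 * v j 3 +
        v i 4 * v j 4 + v i 5 * v j 5 + v i 6 * v j 6 = if i = j then 1 else 0 := by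
    intro i j
    have h := (orthonormal_iff_ite.mp hv) i j
    simp [PiLp.inner_apply, RCLike.inner_apply, conj_trivial, Fin.sum_univ_seven] at h
    linear_combination h
  have hxx : v 0 0 * v 0 0 + v 0 1 * v 0 1 + v 0 2 * v 0 2 + v 0 3 * v 0 3 + v 0 4 * v 0 4 + v 0 5 * v 0 5 + v 0 6 * v 0 6 = 1 := by simpa using hinner 0 0
  have hyy : v 1 0 * v 1 0 + v 1 1 * v 1 1 + v 1 2 * v 1 2 + v 1 3 * v 1 3 + v 1 4 * v 1 4 + v 1 5 * v 1 5 + v 1 6 * v 1 6 = 1 := by simpa using hinner 1 1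
  have hzz : v 2 0 * v 2 0 + v 2 1 * v 2 1 + v 2 2 * v 2 2 + v 2 3 * v 2 3 + v 2 4 * v 2 4 + v 2 5 * v 2 5 + v 2 6 * v 2 6 = 1 := by simpa using hinner 2 2
  have hww : v 3 0 * v 3 0 + v 3 1 * v 3 1 + v 3 2 * v 3 2 + v 3 3 * v 3 3 + v 3 4 * v 3 4 + v 3 5 * v 3 5 + v 3 6 * v 3 6 = 1 := by simpa using hinner 3 3
  have hxy : v 0 0 * v 1 0 + v 0 1 * v 1 1 + v 0 2 * v 1 2 + v 0 3 * v 1 3 + v 0 4 * v 1 4 + v 0 5 * v 1 5 + v 0 6 * v 1 6 = 0 := by simpa using hinner 0 1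
  have hxz : v 0 0 * v 2 0 + v 0 1 * v 2 1 + v 0 2 * v 2 2 + v 0 3 * v 2 3 + v 0 4 * v 2 4 + v 0 5 * v 2 5 + v 0 6 * v 2 6 = 0 := by simpa using hinner 0 2
  have hxw : v 0 0 * v 3 0 + v 0 1 * v 3 1 + v 0 2 * v 3 2 + v 0 3 * v 3 3 + v 0 4 * v 3 4 + v 0 5 * v 3 5 + v 0 6 * v 3 6 = 0 := by simpa using hinner 0 3
  have hyz : v 1 0 * v 2 0 + v 1 1 * v 2 1 + v 1 2 * v 2 2 + v 1 3 * v 2 3 + v 1 4 * v 2 4 + v 1 5 * v 2 5 + v 1 6 * v 2 6 = 0 := by simpa using hinner 1 2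
  have hyw : v 1 0 * v 3 0 + v 1 1 * v 3 1 + v 1 2 * v 3 2 + v 1 3 * v 3 3 + v 1 4 * v 3 4 + v 1 5 * v 3 5 + v 1 6 * v 3 6 = 0 := by simpa using hinner 1 3
  have hzw : v 2 0 * v 3 0 + v 2 1 * v 3 1 + v 2 2 * v 3 2 + v 2 3 * v 3 3 + v 2 4 * v 3 4 + v 2 5 * v 3 5 + v 2 6 * v 3 6 = 0 := by simpa using hinner 2 3
  have hA : phi (v 0) (v 1) (v 2) = -v 0 0*v 1 1*v 2 4 - v 0 0*v 1 2*v 2 5 - v 0 0*v 1 3*v 2 6 + v 0 0*v 1 4*v 2 1 + v 0 0*v 1 5*v 2 2 + v 0 0*v 1 6*v 2 3 + v 0 1*v 1 0*v 2 4 - v 0 1*v 1 2*v 2 6 + v 0 1*v 1 3*v 2 5 - v 0 1*v 1 4*v 2 0 - v 0 1*v 1 5*v 2 3 + v 0 1*v 1 6*v 2 2 + v 0 2*v 1 0*v 2 5 + v 0 2*v 1 1*v 2 6 - v 0 2*v 1 3*v 2 4 + v 0 2*v 1 4*v 2 3 - v 0 2*v 1 5*v 2 0 - v 0 2*v 1 6*v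 2 1 + v 0 3*v 1 0*v 2 6 - v 0 3*v 1 1*v 2 5 + v 0 3*v 1 2*v 2 4 - v 0 3*v 1 4*v 2 2 + v 0 3*v 1 5*v 2 1 - v 0 3*v 1 6*v 2 0 - v 0 4*v 1 0*v 2 1 + v 0 4*v 1 1*v 2 0 - v 0 4*v 1 2*v 2 3 + v 0 4*v 1 3*v 2 2 + v 0 4*v 1 5*v 2 6 - v 0 4*v 1 6*v 2 5 - v 0 5*v 1 0*v 2 2 + v 0 5*v 1 1*v 2 3 + v 0 5*v 1 2*v 2 0 - v 0 5*v 1 3*v 2 1 - v 0 5*v 1 4*v 2 6 + v 0 5*v 1 6*v 2 4 - v 0 6*v 1 0*v 2 3 - v 0 6*v 1 1*v 2 2 + v 0 6*v 1 2*v 2 1 + v 0 6*v 1 3*v 2 0 + v 0 6*v 1 4*v 2 5 - v 0 6*v 1 5*v 2 4 := by simp only [phi, det3]; ring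
  have hB : phi (v 0) (v 1) (v 3) = -v 3 0*v 0 1*v 1 4 - v 3 0*v 0 2*v 1 5 - v 3 0*v 0 3*v 1 6 + v 3 0*v 0 4*v 1 1 + v 3 0*v 0 5*v 1 2 + v 3 0*v 0 6*v 1 3 + v 3 1*v 0 0*v 1 4 - v 3 1*v 0 2*v 1 6 + v 3 1*v 0 3*v 1 5 - v 3 1*v 0 4*v 1 0 - v 3 1*v 0 5*v 1 3 + v 3 1*v 0 6*v 1 2 + v 3 2*v 0 0*v 1 5 + v 3 2*v 0 1*v 1 6 - v 3 2*v 0 3*v 1 4 + v 3 2*v 0 4*v 1 3 - v 3 2*v 0 5*v 1 0 - v 3 2*v 0 6*v 1 1 + v 3 3*v 0 0*v 1 6 - v 3 3*v 0 1*v 1 5 + v 3 3*v 0 2*v 1 4 - v 3 3*v 0 4*v 1 2 + v 3 3*v 0 5*v 1 1 - v 3 3*v 0 6*v 1 0 - v 3 4*v 0 0*v 1 1 + v 3 4*v 0 1*v 1 0 - v 3 4*v 0 2*v 1 3 + v 3 4*v 0 3*v 1 2 + v 3 4*v 0 5*v 1 6 - v 3 4*v 0 6*v 1 5 - v 3 5*v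 0 0*v 1 2 + v 3 5*v 0 1*v 1 3 + v 3 5*v 0 2*v 1 0 - v 3 5*v 0 3*v 1 1 - v 3 5*v 0 4*v 1 6 + v 3 5*v 0 6*v 1 4 - v 3 6*v 0 0*v 1 3 - v 3 6*v 0 1*v 1 2 + v 3 6*v 0 2*v 1 1 + v 3 6*v 0 3*v 1 0 + v 3 6*v 0 4*v 1 5 - v 3 6*v 0 5*v 1 4 := by simp only [phi, det3]; ring
  have hC : phi (v 0) (v 2) (v 3) = -v 3 0*v 0 1*v 2 4 - v 3 0*v 0 2*v 2 5 - v 3 0*v 0 3*v 2 6 + v 3 0*v 0 4*v 2 1 + v 3 0*v 0 5*v 2 2 + v 3 0*v 0 6*v 2 3 + v 3 1*v 0 0*v 2 4 - v 3 1*v 0 2*v 2 6 + v 3 1*v 0 3*v 2 5 - v 3 1*v 0 4*v 2 0 - v 3 1*v 0 5*v 2 3 + v 3 1*v 0 6*v 2 2 + v 3 2*v 0 0*v 2 5 + v 3 2*v 0 1*v 2 6 - v 3 2*v 0 3*v 2 4 + v 3 2*v 0 4*v 2 3 - v 3 2*v 0 5*v 2 0 - v 3 2*v 0 6*v 2 1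 + v 3 3*v 0 0*v 2 6 - v 3 3*v 0 1*v 2 5 + v 3 3*v 0 2*v 2 4 - v 3 3*v 0 4*v 2 2 + v 3 3*v 0 5*v 2 1 - v 3 3*v 0 6*v 2 0 - v 3 4*v 0 0*v 2 1 + v 3 4*v 0 1*v 2 0 - v 3 4*v 0 2*v 2 3 + v 3 4*v 0 3*v 2 2 + v 3 4*v 0 5*v 2 6 - v 3 4*v 0 6*v 2 5 - v 3 5*v 0 0*v 2 2 + v 3 5*v 0 1*v 2 3 + v 3 5*v 0 2*v 2 0 - v 3 5*v 0 3*v 2 1 - v 3 5*v 0 4*v 2 6 + v 3 5*v 0 6*v 2 4 - v 3 6*v 0 0*v 2 3 - v 3 6*v 0 1*v 2 2 + v 3 6*v 0 2*v 2 1 + v 3 6*v 0 3*v 2 0 + v 3 6*v 0 4*v 2 5 - v 3 6*v 0 5*v 2 4 := by simp only [phi, det3]; ring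
  have hD : phi (v 1) (v 2) (v 3) = -v 3 0*v 1 1*v 2 4 - v 3 0*v 1 2*v 2 5 - v 3 0*v 1 3*v 2 6 + v 3 0*v 1 4*v 2 1 + v 3 0*v 1 5*v 2 2 + v 3 0*v 1 6*v 2 3 + v 3 1*v 1 0*v 2 4 - v 3 1*v 1 2*v 2 6 + v 3 1*v 1 3*v 2 5 - v 3 1*v 1 4*v 2 0 - v 3 1*v 1 5*v 2 3 + v 3 1*v 1 6*v 2 2 + v 3 2*v 1 0*v 2 5 + v 3 2*v 1 1*v 2 6 - v 3 2*v 1 3*v 2 4 + v 3 2*v 1 4*v 2 3 - v 3 2*v 1 5*v 2 0 - v 3 2*v 1 6*v 2 1 + v 3 3*v 1 0*v 2 6 - v 3 3*v 1 1*v 2 5 + v 3 3*v 1 2*v 2 4 - v 3 3*v 1 4*v 2 2 + v 3 3*v 1 5*v 2 1 - v 3 3*v 1 6*v 2 0 - v 3 4*v 1 0*v 2 1 + v 3 4*v 1 1*v 2 0 - v 3 4*v 1 2*v 2 3 + v 3 4*v 1 3*v 2 2 + v 3 4*v 1 5*v 2 6 - v 3 4*v 1 6*v 2 5 - v 3 5*v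 1 0*v 2 2 + v 3 5*v 1 1*v 2 3 + v 3 5*v 1 2*v 2 0 - v 3 5*v 1 3*v 2 1 - v 3 5*v 1 4*v 2 6 + v 3 5*v 1 6*v 2 4 - v 3 6*v 1 0*v 2 3 - v 3 6*v 1 1*v 2 2 + v 3 6*v 1 2*v 2 1 + v 3 6*v 1 3*v 2 0 + v 3 6*v 1 4*v 2 5 - v 3 6*v 1 5*v 2 4 := by simp only [phi, det3]; ring
  have hP : psi (v 0) (v 1) (v 2) (v 3) = -v 3 0*v 0 1*v 1 2*v 2 3 + v 3 0*v 0 1*v 1 3*v 2 2 + v 3 0*v 0 1*v 1 5*v 2 6 - v 3 0*v 0 1*v 1 6*v 2 5 + v 3 0*v 0 2*v 1 1*v 2 3 - v 3 0*v 0 2*v 1 3*v 2 1 - v 3 0*v 0 2*v 1 4*v 2 6 + v 3 0*v 0 2*v 1 6*v 2 4 - v 3 0*v 0 3*v 1 1*v 2 2 + v 3 0*v 0 3*v 1 2*v 2 1 + v 3 0*v 0 3*v 1 4*v 2 5 - v 3 0*v 0 3*v 1 5*v 2 4 + v 3 0*v 0 4*v 1 2*v 2 6 - v 3 0*v 0 4*v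 1 3*v 2 5 + v 3 0*v 0 4*v 1 5*v 2 3 - v 3 0*v 0 4*v 1 6*v 2 2 - v 3 0*v 0 5*v 1 1*v 2 6 + v 3 0*v 0 5*v 1 3*v 2 4 - v 3 0*v 0 5*v 1 4*v 2 3 + v 3 0*v 0 5*v 1 6*v 2 1 + v 3 0*v 0 6*v 1 1*v 2 5 - v 3 0*v 0 6*v 1 2*v 2 4 + v 3 0*v 0 6*v 1 4*v 2 2 - v 3 0*v 0 6*v 1 5*v 2 1 + v 3 1*v 0 0*v 1 2*v 2 3 - v 3 1*v 0 0*v 1 3*v 2 2 - v 3 1*v 0 0*v 1 5*v 2 6 + v 3 1*v 0 0*v 1 6*v 2 5 - v 3 1*v 0 2*v 1 0*v 2 3 + v 3 1*v 0 2*v 1 3*v 2 0 + v 3 1*v 0 2*v 1 4*v 2 5 - v 3 1*v 0 2*v 1 5*v 2 4 + v 3 1*v 0 3*v 1 0*v 2 2 - v 3 1*v 0 3*v 1 2*v 2 0 + v 3 1*v 0 3*v 1 4*v 2 6 - v 3 1*v 0 3*v 1 6*v 2 4 - v 3 1*v 0 4*v 1 2*v 2 5 - v 3 1*v 0 4*v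 1 3*v 2 6 + v 3 1*v 0 4*v 1 5*v 2 2 + v 3 1*v 0 4*v 1 6*v 2 3 + v 3 1*v 0 5*v 1 0*v 2 6 + v 3 1*v 0 5*v 1 2*v 2 4 - v 3 1*v 0 5*v 1 4*v 2 2 - v 3 1*v 0 5*v 1 6*v 2 0 - v 3 1*v 0 6*v 1 0*v 2 5 + v 3 1*v 0 6*v 1 3*v 2 4 - v 3 1*v 0 6*v 1 4*v 2 3 + v 3 1*v 0 6*v 1 5*v 2 0 - v 3 2*v 0 0*v 1 1*v 2 3 + v 3 2*v 0 0*v 1 3*v 2 1 + v 3 2*v 0 0*v 1 4*v 2 6 - v 3 2*v 0 0*v 1 6*v 2 4 + v 3 2*v 0 1*v 1 0*v 2 3 - v 3 2*v 0 1*v 1 3*v 2 0 - v 3 2*v 0 1*v 1 4*v 2 5 + v 3 2*v 0 1*v 1 5*v 2 4 - v 3 2*v 0 3*v 1 0*v 2 1 + v 3 2*v 0 3*v 1 1*v 2 0 + v 3 2*v 0 3*v 1 5*v 2 6 - v 3 2*v 0 3*v 1 6*v 2 5 - v 3 2*v 0 4*v 1 0*v 2 6 + v 3 2*v 0 4*v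 1 1*v 2 5 - v 3 2*v 0 4*v 1 5*v 2 1 + v 3 2*v 0 4*v 1 6*v 2 0 - v 3 2*v 0 5*v 1 1*v 2 4 - v 3 2*v 0 5*v 1 3*v 2 6 + v 3 2*v 0 5*v 1 4*v 2 1 + v 3 2*v 0 5*v 1 6*v 2 3 + v 3 2*v 0 6*v 1 0*v 2 4 + v 3 2*v 0 6*v 1 3*v 2 5 - v 3 2*v 0 6*v 1 4*v 2 0 - v 3 2*v 0 6*v 1 5*v 2 3 + v 3 3*v 0 0*v 1 1*v 2 2 - v 3 3*v 0 0*v 1 2*v 2 1 - v 3 3*v 0 0*v 1 4*v 2 5 + v 3 3*v 0 0*v 1 5*v 2 4 - v 3 3*v 0 1*v 1 0*v 2 2 + v 3 3*v 0 1*v 1 2*v 2 0 - v 3 3*v 0 1*v 1 4*v 2 6 + v 3 3*v 0 1*v 1 6*v 2 4 + v 3 3*v 0 2*v 1 0*v 2 1 - v 3 3*v 0 2*v 1 1*v 2 0 - v 3 3*v 0 2*v 1 5*v 2 6 + v 3 3*v 0 2*v 1 6*v 2 5 + v 3 3*v 0 4*v 1 0*v 2 5 + v 3 3*v 0 4*v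 1 1*v 2 6 - v 3 3*v 0 4*v 1 5*v 2 0 - v 3 3*v 0 4*v 1 6*v 2 1 - v 3 3*v 0 5*v 1 0*v 2 4 + v 3 3*v 0 5*v 1 2*v 2 6 + v 3 3*v 0 5*v 1 4*v 2 0 - v 3 3*v 0 5*v 1 6*v 2 2 - v 3 3*v 0 6*v 1 1*v 2 4 - v 3 3*v 0 6*v 1 2*v 2 5 + v 3 3*v 0 6*v 1 4*v 2 1 + v 3 3*v 0 6*v 1 5*v 2 2 - v 3 4*v 0 0*v 1 2*v 2 6 + v 3 4*v 0 0*v 1 3*v 2 5 - v 3 4*v 0 0*v 1 5*v 2 3 + v 3 4*v 0 0*v 1 6*v 2 2 + v 3 4*v 0 1*v 1 2*v 2 5 + v 3 4*v 0 1*v 1 3*v 2 6 - v 3 4*v 0 1*v 1 5*v 2 2 - v 3 4*v 0 1*v 1 6*v 2 3 + v 3 4*v 0 2*v 1 0*v 2 6 - v 3 4*v 0 2*v 1 1*v 2 5 + v 3 4*v 0 2*v 1 5*v 2 1 - v 3 4*v 0 2*v 1 6*v 2 0 - v 3 4*v 0 3*v 1 0*v 2 5 - v 3 4*v 0 3*v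 1 1*v 2 6 + v 3 4*v 0 3*v 1 5*v 2 0 + v 3 4*v 0 3*v 1 6*v 2 1 + v 3 4*v 0 5*v 1 0*v 2 3 + v 3 4*v 0 5*v 1 1*v 2 2 - v 3 4*v 0 5*v 1 2*v 2 1 - v 3 4*v 0 5*v 1 3*v 2 0 - v 3 4*v 0 6*v 1 0*v 2 2 + v 3 4*v 0 6*v 1 1*v 2 3 + v 3 4*v 0 6*v 1 2*v 2 0 - v 3 4*v 0 6*v 1 3*v 2 1 + v 3 5*v 0 0*v 1 1*v 2 6 - v 3 5*v 0 0*v 1 3*v 2 4 + v 3 5*v 0 0*v 1 4*v 2 3 - v 3 5*v 0 0*v 1 6*v 2 1 - v 3 5*v 0 1*v 1 0*v 2 6 - v 3 5*v 0 1*v 1 2*v 2 4 + v 3 5*v 0 1*v 1 4*v 2 2 + v 3 5*v 0 1*v 1 6*v 2 0 + v 3 5*v 0 2*v 1 1*v 2 4 + v 3 5*v 0 2*v 1 3*v 2 6 - v 3 5*v 0 2*v 1 4*v 2 1 - v 3 5*v 0 2*v 1 6*v 2 3 + v 3 5*v 0 3*v 1 0*v 2 4 - v 3 5*v 0 3*v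 1 2*v 2 6 - v 3 5*v 0 3*v 1 4*v 2 0 + v 3 5*v 0 3*v 1 6*v 2 2 - v 3 5*v 0 4*v 1 0*v 2 3 - v 3 5*v 0 4*v 1 1*v 2 2 + v 3 5*v 0 4*v 1 2*v 2 1 + v 3 5*v 0 4*v 1 3*v 2 0 + v 3 5*v 0 6*v 1 0*v 2 1 - v 3 5*v 0 6*v 1 1*v 2 0 + v 3 5*v 0 6*v 1 2*v 2 3 - v 3 5*v 0 6*v 1 3*v 2 2 - v 3 6*v 0 0*v 1 1*v 2 5 + v 3 6*v 0 0*v 1 2*v 2 4 - v 3 6*v 0 0*v 1 4*v 2 2 + v 3 6*v 0 0*v 1 5*v 2 1 + v 3 6*v 0 1*v 1 0*v 2 5 - v 3 6*v 0 1*v 1 3*v 2 4 + v 3 6*v 0 1*v 1 4*v 2 3 - v 3 6*v 0 1*v 1 5*v 2 0 - v 3 6*v 0 2*v 1 0*v 2 4 - v 3 6*v 0 2*v 1 3*v 2 5 + v 3 6*v 0 2*v 1 4*v 2 0 + v 3 6*v 0 2*v 1 5*v 2 3 + v 3 6*v 0 3*v 1 1*v 2 4 + v 3 6*v 0 3*v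 1 2*v 2 5 - v 3 6*v 0 3*v 1 4*v 2 1 - v 3 6*v 0 3*v 1 5*v 2 2 + v 3 6*v 0 4*v 1 0*v 2 2 - v 3 6*v 0 4*v 1 1*v 2 3 - v 3 6*v 0 4*v 1 2*v 2 0 + v 3 6*v 0 4*v 1 3*v 2 1 - v 3 6*v 0 5*v 1 0*v 2 1 + v 3 6*v 0 5*v 1 1*v 2 0 - v 3 6*v 0 5*v 1 2*v 2 3 + v 3 6*v 0 5*v 1 3*v 2 2 := by simp only [psi, det4, det3]; ring
  have key := @key_identity (v 0 0) (v 0 1) (v 0 2) (v 0 3) (v 0 4) (v 0 5) (v 0 6) (v 1 0) (v 1 1) (v 1 2) (v 1 3) (v 1 4) (v 1 5) (v 1 6) (v 2 0) (v 2 1) (v 2 2) (v 2 3) (v 2 4) (v 2 5) (v 2 6) (v 3 0) (v 3 1) (v 3 2) (v 3 3) (v 3 4) (v 3 5) (v 3 6) (phi (v 0) (v 1) (v 2)) (phi (v 0) (v 1) (v 3)) (phi (v 0) (v 2) (v 3)) (phi (v 1) (v 2) (v 3)) (psi (v 0) (v 1) (v 2) (v 3)) hA hB hC hD hP hxx hyy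 hzz hww hxy hxz hxw hyz hyw hzw
  constructor
  · intro habs
    have hsq : psi (v 0) (v 1) (v 2) (v 3) * psi (v 0) (v 1) (v 2) (v 3) = 1 := by
      rcases (abs_eq (by norm_num : (0:ℝ) ≤ 1)).mp habs with h | h <;> rw [h] <;> norm_num
    have hsum : phi (v 0) (v 1) (v 2) * phi (v 0) (v 1) (v 2) +
        phi (v 0) (v 1) (v 3) * phi (v 0) (v 1) (v 3) +
        phi (v 0) (v 2) (v 3) * phi (v 0) (v 2) (v 3) +
        phi (v 1) (v 2) (v 3) * phi (v 1) (v 2) (v 3) = 0 := by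
      linear_combination key - hsq
    obtain ⟨h012, h013, h023, h123⟩ := sq_sum4_eq_zero _ _ _ _ hsum
    have h021 : phi (v 0) (v 2) (v 1) = 0 := by
      have e : phi (v 0) (v 2) (v 1) = -(phi (v 0) (v 1) (v 2)) := by simp only [phi, det3]; ring
      rw [e, h012, neg_zero]
    have h102 : phi (v 1) (v 0) (v 2) = 0 := by
      have e : phi (v 1) (v 0) (v 2) = -(phi (v 0) (v 1) (v 2)) := by simp only [phi, det3]; ring
      rw [e, h012, neg_zero]
    have h120 : phi (v 1) (v 2) (v 0) = 0 := by
      have e : phi (v 1) (v 2) (v 0) = phi (v 0) (v 1) (v 2) := by simp only [phi, det3]; ring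
      rw [e]; exact h012
    have h201 : phi (v 2) (v 0) (v 1) = 0 := by
      have e : phi (v 2) (v 0) (v 1) = phi (v 0) (v 1) (v 2) := by simp only [phi, det3]; ring
      rw [e]; exact h012
    have h210 : phi (v 2) (v 1) (v 0) = 0 := by
      have e : phi (v 2) (v 1) (v 0) = -(phi (v 0) (v 1) (v 2)) := by simp only [phi, det3]; ring
      rw [e, h012, neg_zero]
    have h031 : phi (v 0) (v 3) (v 1) = 0 := by
      have e : phi (v 0) (v 3) (v 1) = -(phi (v 0) (v 1) (v 3)) := by simp only [phi, det3]; ring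
      rw [e, h013, neg_zero]
    have h103 : phi (v 1) (v 0) (v 3) = 0 := by
      have e : phi (v 1) (v 0) (v 3) = -(phi (v 0) (v 1) (v 3)) := by simp only [phi, det3]; ring
      rw [e, h013, neg_zero]
    have h130 : phi (v 1) (v 3) (v 0) = 0 := by
      have e : phi (v 1) (v 3) (v 0) = phi (v 0) (v 1) (v 3) := by simp only [phi, det3]; ring
      rw [e]; exact h013
    have h301 : phi (v 3) (v 0) (v 1) = 0 := by
      have e : phi (v 3) (v 0) (v 1) = phi (v 0) (v 1) (v 3) := by simp only [phi, det3]; ring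
      rw [e]; exact h013
    have h310 : phi (v 3) (v 1) (v 0) = 0 := by
      have e : phi (v 3) (v 1) (v 0) = -(phi (v 0) (v 1) (v 3)) := by simp only [phi, det3]; ring
      rw [e, h013, neg_zero]
    have h032 : phi (v 0) (v 3) (v 2) = 0 := by
      have e : phi (v 0) (v 3) (v 2) = -(phi (v 0) (v 2) (v 3)) := by simp only [phi, det3]; ring
      rw [e, h023, neg_zero]
    have h203 : phi (v 2) (v 0) (v 3) = 0 := by
      have e : phi (v 2) (v 0) (v 3) = -(phi (v 0) (v 2) (v 3)) := by simp only [phi, det3]; ring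
      rw [e, h023, neg_zero]
    have h230 : phi (v 2) (v 3) (v 0) = 0 := by
      have e : phi (v 2) (v 3) (v 0) = phi (v 0) (v 2) (v 3) := by simp only [phi, det3]; ring
      rw [e]; exact h023
    have h302 : phi (v 3) (v 0) (v 2) = 0 := by
      have e : phi (v 3) (v 0) (v 2) = phi (v 0) (v 2) (v 3) := by simp only [phi, det3]; ring
      rw [e]; exact h023
    have h320 : phi (v 3) (v 2) (v 0) = 0 := by
      have e : phi (v 3) (v 2) (v 0) = -(phi (v 0) (v 2) (v 3)) := by simp only [phi, det3]; ring
      rw [e, h023, neg_zero]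
    have h132 : phi (v 1) (v 3) (v 2) = 0 := by
      have e : phi (v 1) (v 3) (v 2) = -(phi (v 1) (v 2) (v 3)) := by simp only [phi, det3]; ring
      rw [e, h123, neg_zero]
    have h213 : phi (v 2) (v 1) (v 3) = 0 := by
      have e : phi (v 2) (v 1) (v 3) = -(phi (v 1) (v 2) (v 3)) := by simp only [phi, det3]; ring
      rw [e, h123, neg_zero]
    have h231 : phi (v 2) (v 3) (v 1) = 0 := by
      have e : phi (v 2) (v 3) (v 1) = phi (v 1) (v 2) (v 3) := by simp only [phi, det3]; ring
      rw [e]; exact h123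
    have h312 : phi (v 3) (v 1) (v 2) = 0 := by
      have e : phi (v 3) (v 1) (v 2) = phi (v 1) (v 2) (v 3) := by simp only [phi, det3]; ring
      rw [e]; exact h123
    have h321 : phi (v 3) (v 2) (v 1) = 0 := by
      have e : phi (v 3) (v 2) (v 1) = -(phi (v 1) (v 2) (v 3)) := by simp only [phi, det3]; ring
      rw [e, h123, neg_zero]
    clear key hA hB hC hD hP hxx hyy hzz hww hxy hxz hxw hyz hyw hzw hinner hsum hsq habs
    intro i j k
    fin_cases i <;> fin_cases j <;> fin_cases k
    · exact phi_xxz _ _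
    · exact phi_xxz _ _
    · exact phi_xxz _ _
    · exact phi_xxz _ _
    · exact phi_xyx _ _
    · exact phi_xyy _ _
    · exact h012
    · exact h013
    · exact phi_xyx _ _
    · exact h021
    · exact phi_xyy _ _
    · exact h023
    · exact phi_xyx _ _
    · exact h031
    · exact h032
    · exact phi_xyy _ _
    · exact phi_xyy _ _
    · exact phi_xyx _ _
    · exact h102
    · exact h103
    · exact phi_xxz _ _
    · exact phi_xxz _ _
    · exact phi_xxz _ _
    · exact phi_xxz _ _
    · exact h120
    · exact phi_xyx _ _
    · exact phi_xyy _ _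
    · exact h123
    · exact h130
    · exact phi_xyx _ _
    · exact h132
    · exact phi_xyy _ _
    · exact phi_xyy _ _
    · exact h201
    · exact phi_xyx _ _
    · exact h203
    · exact h210
    · exact phi_xyy _ _
    · exact phi_xyx _ _
    · exact h213
    · exact phi_xxz _ _
    · exact phi_xxz _ _
    · exact phi_xxz _ _
    · exact phi_xxz _ _
    · exact h230
    · exact h231
    · exact phi_xyx _ _
    · exact phi_xyy _ _
    · exact phi_xyy _ _
    · exact h301
    · exact h302
    · exact phi_xyx _ _
    · exact h310
    · exact phi_xyy _ _
    · exact h312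
    · exact phi_xyx _ _
    · exact h320
    · exact h321
    · exact phi_xyy _ _
    · exact phi_xyx _ _
    · exact phi_xxz _ _
    · exact phi_xxz _ _
    · exact phi_xxz _ _
    · exact phi_xxz _ _
  · intro hvan
    have h012 := hvan 0 1 2
    have h013 := hvan 0 1 3
    have h023 := hvan 0 2 3
    have h123 := hvan 1 2 3
    rw [h012, h013, h023, h123] at key
    have hsq : psi (v 0) (v 1) (v 2) (v 3) * psi (v 0) (v 1) (v 2) (v 3) = 1 := by
      linear_combination key
    rcases mul_self_eq_one_iff.mp hsq with h | h <;> rw [h] <;> norm_num
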